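/- arXiv:2012.09648 — 4 statements merged into one kernel-verified Lean document; each statement's English description precedes it below -/
import Mathlib

section
/- For a left-continuous distortion function g, the Wang premium principle π_g(X) = (1+θ)∫₀^∞ g(S_X(x)) dx is lower semicontinuous with respect to dominated almost-sure convergence: if X_n ≥ 0, X_n ≤ Y a.s. with Y ∈ L^p, and X_n → X a.s., then liminf_n π_g(X_n) ≥ π_g(X). -/
open MeasureTheory Filter

/-- Fatou property of the Wang premium principle: for a left-continuous distortion
function `g`, if `0 ≤ Xₙ ≤ Y` a.s. with `Y ∈ L^p` and `Xₙ → X` a.s., then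
`liminf_n π_g(Xₙ) ≥ π_g(X)`, where `π_g(X) = (1+θ)∫₀^∞ g(S_X(x)) dx`. -/
theorem wang_premium_fatou {Ω : Type*} [MeasurableSpace Ω]
    (μ : Measure Ω) [IsProbabilityMeasure μ]
    (g : ℝ → ℝ) (hgmono : Monotone g) (hg0 : g 0 = 0) (hg1 : g 1 = 1)
    (hglc : ∀ x, ContinuousWithinAt g (Set.Iio x) x)
    (θ : ℝ) (hθ : 0 ≤ θ) (p : ENNReal) (hp : 1 ≤ p)
    (X : ℕ → Ω → ℝ) (Xlim : Ω → ℝ) (Y : Ω → ℝ)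
    (hmeas : ∀ n, Measurable (X n)) (hmeaslim : Measurable Xlim)
    (hpos : ∀ n ω, 0 ≤ X n ω) (hposlim : ∀ ω, 0 ≤ Xlim ω)
    (hY : MemLp Y p μ)
    (hdom : ∀ n, ∀ᵐ ω ∂μ, X n ω ≤ Y ω)
    (hconv : ∀ᵐ ω ∂μ, Tendsto (fun n => X n ω) atTop (nhds (Xlim ω))) :
    ENNReal.ofReal (1 + θ) *
        ∫⁻ x in Set.Ioi (0 : ℝ), ENNReal.ofReal (g ((μ {ω | x < Xlim ω}).toReal)) ≤
      liminf (fun n => ENNReal.ofReal (1 + θ) *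
        ∫⁻ x in Set.Ioi (0 : ℝ), ENNReal.ofReal (g ((μ {ω | x < X n ω}).toReal))) atTop := by
  classical
  -- Step 1: liminf of survival measures dominates limit survival measure
  have hmeasle : ∀ x : ℝ, μ {ω | x < Xlim ω} ≤
      liminf (fun n => μ {ω | x < X n ω}) atTop := by
    intro x
    have hAmeas : MeasurableSet {ω | x < Xlim ω} := measurableSet_lt measurable_const hmeaslim
    have hAn : ∀ n, MeasurableSet {ω | x < X n ω} :=
      fun n => measurableSet_lt measurable_const (hmeas n)
    calc μ {ω | x < Xlim ω}
        = ∫⁻ ω, ({ω | x < Xlim ω}).indicator (fun _ => (1 : ENNReal)) ω ∂μ :=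
          (lintegral_indicator_one hAmeas).symm
      _ ≤ ∫⁻ ω, liminf (fun n => ({ω | x < X n ω}).indicator (fun _ => (1 : ENNReal)) ω)
            atTop ∂μ := by
          refine lintegral_mono_ae (hconv.mono fun ω hω => ?_)
          by_cases hx : x < Xlim ω
          · have hxm : ω ∈ {ω | x < Xlim ω} := hx
            rw [Set.indicator_of_mem hxm]
            refine le_liminf_of_le (by isBoundedDefault) ?_
            filter_upwards [hω.eventually_const_lt hx] with n hn
            have hnm : ω ∈ {ω | x < X n ω} := hn
            rw [Set.indicator_of_mem hnm]
          · have hxm : ω ∉ {ω | x < Xlim ω} := hx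
            rw [Set.indicator_of_notMem hxm]
            exact zero_le
      _ ≤ liminf (fun n => ∫⁻ ω, ({ω | x < X n ω}).indicator (fun _ => (1 : ENNReal)) ω ∂μ)
            atTop :=
          lintegral_liminf_le fun n => measurable_const.indicator (hAn n)
      _ = liminf (fun n => μ {ω | x < X n ω}) atTop := by
          refine Filter.liminf_congr (Filter.Eventually.of_forall fun n => ?_)
          exact lintegral_indicator_one (hAn n)
  -- Step 2: pointwise lower semicontinuity of the integrand
  have key : ∀ x : ℝ, ENNReal.ofReal (g ((μ {ω | x < Xlim ω}).toReal)) ≤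
      liminf (fun n => ENNReal.ofReal (g ((μ {ω | x < X n ω}).toReal))) atTop := by
    intro x
    set s : ℝ := (μ {ω | x < Xlim ω}).toReal with hs
    rw [le_liminf_iff]
    intro c hc
    have hcne : c ≠ ⊤ := hc.ne_top
    have hcs : c.toReal < g s := (ENNReal.lt_ofReal_iff_toReal_lt hcne).1 hc
    have hc0 : (0 : ℝ) ≤ c.toReal := ENNReal.toReal_nonneg
    -- get t < s with g t > c.toReal via left-continuity
    have hspos : 0 < s := by
      by_contra h
      push_neg at h
      have : g s ≤ g 0 := hgmono h
      rw [hg0] at this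
      linarith
    have hnb : (nhdsWithin s (Set.Iio s)).NeBot := nhdsLT_neBot s
    obtain ⟨t, hgt, hts⟩ :=
      (((hglc s).eventually (lt_mem_nhds hcs)).and self_mem_nhdsWithin).exists
    have ht0 : 0 < t := by
      by_contra h
      push_neg at h
      have : g t ≤ g 0 := hgmono h
      rw [hg0] at this
      linarith
    -- eventually μ_n > ofReal t
    have hofs : μ {ω | x < Xlim ω} = ENNReal.ofReal s := by
      rw [hs, ENNReal.ofReal_toReal (measure_ne_top μ _)]
    have hlt : ENNReal.ofReal t < liminf (fun n => μ {ω | x < X n ω}) atTop := by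
      have h1 : ENNReal.ofReal t < μ {ω | x < Xlim ω} := by
        rw [hofs]
        exact (ENNReal.ofReal_lt_ofReal_iff hspos).2 hts
      exact h1.trans_le (hmeasle x)
    filter_upwards [eventually_lt_of_lt_liminf hlt] with n hn
    have htn : t < (μ {ω | x < X n ω}).toReal :=
      (ENNReal.ofReal_lt_iff_lt_toReal ht0.le (measure_ne_top μ _)).1 hn
    have : c.toReal < g ((μ {ω | x < X n ω}).toReal) :=
      lt_of_lt_of_le hgt (hgmono htn.le)
    exact (ENNReal.lt_ofReal_iff_toReal_lt hcne).2 this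
  -- Step 3: Fatou for the outer integral
  have hanti : ∀ n, Antitone fun x : ℝ =>
      ENNReal.ofReal (g ((μ {ω | x < X n ω}).toReal)) := by
    intro n x y hxy
    refine ENNReal.ofReal_le_ofReal (hgmono (ENNReal.toReal_mono (measure_ne_top μ _)
      (measure_mono fun ω hω => lt_of_le_of_lt hxy hω)))
  have h1 : (∫⁻ x in Set.Ioi (0 : ℝ), ENNReal.ofReal (g ((μ {ω | x < Xlim ω}).toReal))) ≤
      liminf (fun n => ∫⁻ x in Set.Ioi (0 : ℝ),
        ENNReal.ofReal (g ((μ {ω | x < X n ω}).toReal))) atTop :=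
    calc (∫⁻ x in Set.Ioi (0 : ℝ), ENNReal.ofReal (g ((μ {ω | x < Xlim ω}).toReal)))
        ≤ ∫⁻ x in Set.Ioi (0 : ℝ), liminf (fun n =>
            ENNReal.ofReal (g ((μ {ω | x < X n ω}).toReal))) atTop :=
          lintegral_mono fun x => key x
      _ ≤ _ := lintegral_liminf_le fun n => (hanti n).measurable
  calc ENNReal.ofReal (1 + θ) *
        ∫⁻ x in Set.Ioi (0 : ℝ), ENNReal.ofReal (g ((μ {ω | x < Xlim ω}).toReal))
      ≤ ENNReal.ofReal (1 + θ) * liminf (fun n => ∫⁻ x in Set.Ioi (0 : ℝ),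
          ENNReal.ofReal (g ((μ {ω | x < X n ω}).toReal))) atTop :=
        mul_le_mul_right h1 _
    _ = liminf (fun _ : ℕ => ENNReal.ofReal (1 + θ)) atTop *
          liminf (fun n => ∫⁻ x in Set.Ioi (0 : ℝ),
            ENNReal.ofReal (g ((μ {ω | x < X n ω}).toReal))) atTop := by
        rw [liminf_const]
    _ ≤ _ := ENNReal.le_liminf_mul
end

section
/- Expected Shortfall ES_α(X) = (1/(1−α)) ∫_α^1 F_X^{-1}(u) du, α ∈ [0,1), is subadditive on L^1: ES_α(X + Y) ≤ ES_α(X) + ES_α(Y) for all integrable X, Y. -/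
open MeasureTheory

/-- The (generalized inverse) quantile function of `X` under `μ`. -/
noncomputable def quantileFn {Ω : Type*} [MeasurableSpace Ω]
    (μ : Measure Ω) (X : Ω → ℝ) (u : ℝ) : ℝ :=
  sInf {x : ℝ | u ≤ (μ {ω | X ω ≤ x}).toReal}

/-- Expected Shortfall `ES_α(X) = (1/(1−α)) ∫_α^1 F_X^{-1}(u) du`. -/
noncomputable def expShortfall {Ω : Type*} [MeasurableSpace Ω]
    (μ : Measure Ω) (α : ℝ) (X : Ω → ℝ) : ℝ :=
  (1 - α)⁻¹ * ∫ u in Set.Ioo α 1, quantileFn μ X u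

open ProbabilityTheory Set Filter Topology

noncomputable def qf (ν : Measure ℝ) (u : ℝ) : ℝ := sInf {x | u ≤ cdf ν x}

variable {ν : Measure ℝ} [IsProbabilityMeasure ν] {u v x : ℝ}

omit [IsProbabilityMeasure ν] in
lemma qf_nonempty (hu : u < 1) : {x | u ≤ cdf ν x}.Nonempty := by
  obtain ⟨x, hx⟩ := ((tendsto_cdf_atTop ν).eventually (eventually_gt_nhds hu)).exists
  exact ⟨x, hx.le⟩

omit [IsProbabilityMeasure ν] in
lemma qf_bdd (hu : 0 < u) : BddBelow {x | u ≤ cdf ν x} := by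
  obtain ⟨x0, hx0⟩ := (eventually_atBot.mp
    ((tendsto_cdf_atBot ν).eventually (eventually_lt_nhds hu)))
  refine ⟨x0, fun x hx => ?_⟩
  by_contra h
  exact absurd hx (not_le.mpr (hx0 x (le_of_not_ge h)))

omit [IsProbabilityMeasure ν] in
lemma le_cdf_qf (hu0 : 0 < u) (hu1 : u < 1) : u ≤ cdf ν (qf ν u) := by
  have h1 : Tendsto (cdf ν) (𝓝[>] (qf ν u)) (𝓝 (cdf ν (qf ν u))) :=
    ((cdf ν).right_continuous _).mono_left (nhdsWithin_mono _ Ioi_subset_Ici_self)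
  refine ge_of_tendsto h1 ?_
  filter_upwards [self_mem_nhdsWithin] with y hy
  obtain ⟨z, hz, hzy⟩ := (csInf_lt_iff (qf_bdd hu0) (qf_nonempty hu1)).mp hy
  exact le_trans hz (monotone_cdf ν hzy.le)

omit [IsProbabilityMeasure ν] in
lemma qf_le_iff (hu0 : 0 < u) (hu1 : u < 1) : qf ν u ≤ x ↔ u ≤ cdf ν x := by
  constructor
  · intro h; exact (le_cdf_qf hu0 hu1).trans (monotone_cdf ν h)
  · intro h; exact csInf_le (qf_bdd hu0) h

omit [IsProbabilityMeasure ν] in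
lemma qf_monoOn : MonotoneOn (qf ν) (Ioo (0:ℝ) 1) := fun u hu v hv huv =>
  csInf_le_csInf (qf_bdd hu.1) (qf_nonempty hv.2) (fun x hx => le_trans huv hx)

omit [IsProbabilityMeasure ν] in
lemma qf_aemeasurable : AEMeasurable (qf ν) (volume.restrict (Ioo (0:ℝ) 1)) :=
  aemeasurable_restrict_of_monotoneOn measurableSet_Ioo qf_monoOn

lemma map_qf : Measure.map (qf ν) (volume.restrict (Ioo (0:ℝ) 1)) = ν := by
  have hfin : IsFiniteMeasure (Measure.map (qf ν) (volume.restrict (Ioo (0:ℝ) 1))) := by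
    constructor
    rw [Measure.map_apply_of_aemeasurable qf_aemeasurable MeasurableSet.univ]
    exact lt_of_le_of_lt (measure_mono (subset_univ _))
      (by simp [Real.volume_Ioo])
  have := hfin
  refine Measure.ext_of_Iic _ ν ?_
  intro x
  rw [Measure.map_apply_of_aemeasurable qf_aemeasurable measurableSet_Iic,
    Measure.restrict_apply' measurableSet_Ioo]
  have hset : (qf ν ⁻¹' Iic x) ∩ Ioo (0:ℝ) 1 = Iic (cdf ν x) ∩ Ioo (0:ℝ) 1 := by
    ext u
    simp only [mem_inter_iff, mem_preimage, mem_Iic, mem_Ioo, and_congr_left_iff]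
    intro hu
    rw [qf_le_iff hu.1 hu.2]
  rw [hset, ← ofReal_cdf ν x]
  have h0 : 0 ≤ cdf ν x := cdf_nonneg ν x
  have h1 : cdf ν x ≤ 1 := cdf_le_one ν x
  rcases lt_or_eq_of_le h1 with h | h
  · have : Iic (cdf ν x) ∩ Ioo (0:ℝ) 1 = Ioc 0 (cdf ν x) := by
      ext u
      simp only [mem_inter_iff, mem_Iic, mem_Ioo, mem_Ioc]
      constructor
      · rintro ⟨h1', h2', _⟩; exact ⟨h2', h1'⟩
      · rintro ⟨h1', h2'⟩; exact ⟨h2', h1', lt_of_le_of_lt h2' h⟩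
    rw [this, Real.volume_Ioc, sub_zero]
  · have : Iic (cdf ν x) ∩ Ioo (0:ℝ) 1 = Ioo (0:ℝ) 1 := by
      rw [inter_eq_right]
      intro u hu
      simp only [mem_Iic]
      exact hu.2.le.trans h.ge
    rw [this, Real.volume_Ioo, sub_zero, ← h]

lemma integral_qf (f : ℝ → ℝ) (hf : AEStronglyMeasurable f ν) :
    ∫ u in Ioo (0:ℝ) 1, f (qf ν u) = ∫ x, f x ∂ν := by
  have : ∫ x, f x ∂ν = ∫ u in Ioo (0:ℝ) 1, f (qf ν u) := by
    conv_lhs => rw [← map_qf (ν := ν)]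
    exact integral_map qf_aemeasurable (by rwa [map_qf])
  exact this.symm

lemma integrable_qf_comp (f : ℝ → ℝ) (hf : Integrable f ν) :
    Integrable (fun u => f (qf ν u)) (volume.restrict (Ioo (0:ℝ) 1)) := by
  have h1 : Integrable f (Measure.map (qf ν) (volume.restrict (Ioo (0:ℝ) 1))) := by
    rw [map_qf]; exact hf
  have h2 : AEStronglyMeasurable f (Measure.map (qf ν) (volume.restrict (Ioo (0:ℝ) 1))) := by
    rw [map_qf]; exact hf.aestronglyMeasurable
  have h := (integrable_map_measure h2 qf_aemeasurable).mp h1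
  simpa [Function.comp_def] using h

lemma claimA (hint : Integrable id ν) (r α : ℝ) (hα0 : 0 ≤ α) (hα1 : α < 1) :
    ∫ u in Ioo α 1, qf ν u ≤ (1 - α) * r + ∫ x, max (x - r) 0 ∂ν := by
  have hqint : Integrable (fun u => qf ν u) (volume.restrict (Ioo (0:ℝ) 1)) :=
    integrable_qf_comp id hint
  have hsub : Ioo α 1 ⊆ Ioo (0:ℝ) 1 := Ioo_subset_Ioo hα0 le_rfl
  have hqintα : IntegrableOn (fun u => qf ν u) (Ioo α 1) volume :=
    hqint.mono_measure (Measure.restrict_mono hsub le_rfl)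
  have hmaxint : Integrable (fun u => max (qf ν u - r) 0) (volume.restrict (Ioo (0:ℝ) 1)) :=
    (hqint.sub (integrable_const r)).pos_part
  have hmaxintα : IntegrableOn (fun u => max (qf ν u - r) 0) (Ioo α 1) volume :=
    hmaxint.mono_measure (Measure.restrict_mono hsub le_rfl)
  have hvol : (volume (Ioo α 1)).toReal = 1 - α := by
    rw [Real.volume_Ioo, ENNReal.toReal_ofReal (by linarith)]
  calc ∫ u in Ioo α 1, qf ν u
      ≤ ∫ u in Ioo α 1, (r + max (qf ν u - r) 0) := by
        refine integral_mono hqintα ((integrable_const r).add hmaxintα) (fun u => ?_)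
        have := le_max_left (qf ν u - r) 0
        simp only; linarith
    _ = (1 - α) * r + ∫ u in Ioo α 1, max (qf ν u - r) 0 := by
        rw [integral_add (integrable_const r) hmaxintα, setIntegral_const, measureReal_def, hvol, smul_eq_mul]
    _ ≤ (1 - α) * r + ∫ u in Ioo (0:ℝ) 1, max (qf ν u - r) 0 := by
        refine add_le_add_right (setIntegral_mono_set hmaxint ?_ (HasSubset.Subset.eventuallyLE hsub)) _
        exact Filter.Eventually.of_forall (fun u => le_max_right _ _)
    _ = (1 - α) * r + ∫ x, max (x - r) 0 ∂ν := by
        rw [integral_qf (fun x => max (x - r) 0)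
          ((continuous_id.sub continuous_const).max continuous_const).aestronglyMeasurable]

lemma claimB (hint : Integrable id ν) (α : ℝ) (hα0 : 0 < α) (hα1 : α < 1) :
    ∫ x, max (x - qf ν α) 0 ∂ν = (∫ u in Ioo α 1, qf ν u) - (1 - α) * qf ν α := by
  set r := qf ν α with hr
  have hqint : Integrable (fun u => qf ν u) (volume.restrict (Ioo (0:ℝ) 1)) :=
    integrable_qf_comp id hint
  have hsub : Ioo α 1 ⊆ Ioo (0:ℝ) 1 := Ioo_subset_Ioo hα0.le le_rfl
  have hsub' : Ioc (0:ℝ) α ⊆ Ioo (0:ℝ) 1 := fun u hu => ⟨hu.1, lt_of_le_of_lt hu.2 hα1⟩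
  have hqintα : IntegrableOn (fun u => qf ν u) (Ioo α 1) volume :=
    hqint.mono_measure (Measure.restrict_mono hsub le_rfl)
  have hmaxint : Integrable (fun u => max (qf ν u - r) 0) (volume.restrict (Ioo (0:ℝ) 1)) :=
    (hqint.sub (integrable_const r)).pos_part
  have hvol : (volume (Ioo α 1)).toReal = 1 - α := by
    rw [Real.volume_Ioo, ENNReal.toReal_ofReal (by linarith)]
  have hαmem : α ∈ Ioo (0:ℝ) 1 := ⟨hα0, hα1⟩
  have hunion : Ioc (0:ℝ) α ∪ Ioo α 1 = Ioo (0:ℝ) 1 := Ioc_union_Ioo_eq_Ioo hα0.le hα1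
  have hdisj : Disjoint (Ioc (0:ℝ) α) (Ioo α 1) := by
    refine Set.disjoint_left.mpr (fun u hu hu' => absurd hu.2 (not_le.mpr hu'.1))
  have h1 : ∫ x, max (x - r) 0 ∂ν = ∫ u in Ioo (0:ℝ) 1, max (qf ν u - r) 0 :=
    (integral_qf (fun x => max (x - r) 0)
      ((continuous_id.sub continuous_const).max continuous_const).aestronglyMeasurable).symm
  rw [h1, ← hunion, setIntegral_union hdisj measurableSet_Ioo
    (hmaxint.mono_measure (Measure.restrict_mono hsub' le_rfl))
    (hmaxint.mono_measure (Measure.restrict_mono hsub le_rfl))]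
  have hzero : ∫ u in Ioc (0:ℝ) α, max (qf ν u - r) 0 = 0 := by
    rw [setIntegral_congr_fun measurableSet_Ioc (g := fun _ => (0:ℝ)) ?_, integral_zero]
    intro u hu
    have hle : qf ν u ≤ r := qf_monoOn (hsub' hu) hαmem hu.2
    simp only [max_eq_right (by linarith : qf ν u - r ≤ 0)]
  have hcongr : ∫ u in Ioo α 1, max (qf ν u - r) 0 = ∫ u in Ioo α 1, (qf ν u - r) := by
    refine setIntegral_congr_fun measurableSet_Ioo (fun u hu => ?_)
    have hge : r ≤ qf ν u := qf_monoOn hαmem (hsub hu) hu.1.le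
    simp only [max_eq_left (by linarith : (0:ℝ) ≤ qf ν u - r)]
  rw [hzero, hcongr, zero_add, integral_sub hqintα (integrable_const r), setIntegral_const,
    measureReal_def, hvol, smul_eq_mul]

lemma quantileFn_eq {Ω : Type*} [MeasurableSpace Ω] (μ : Measure Ω) [IsProbabilityMeasure μ]
    {X : Ω → ℝ} (hXm : Measurable X) : quantileFn μ X = qf (μ.map X) := by
  haveI : IsProbabilityMeasure (μ.map X) := Measure.isProbabilityMeasure_map hXm.aemeasurable
  funext u
  unfold quantileFn qf
  congr 1
  ext x
  rw [mem_setOf_eq, mem_setOf_eq, cdf_eq_real, measureReal_def, Measure.map_apply hXm measurableSet_Iic]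
  rfl

/-- Expected Shortfall is subadditive on `L¹`. -/
theorem expShortfall_subadditive {Ω : Type*} [MeasurableSpace Ω]
    (μ : Measure Ω) [IsProbabilityMeasure μ]
    (α : ℝ) (hα0 : 0 ≤ α) (hα1 : α < 1)
    (X Y : Ω → ℝ) (hXm : Measurable X) (hYm : Measurable Y)
    (hX : Integrable X μ) (hY : Integrable Y μ) :
    expShortfall μ α (fun ω => X ω + Y ω) ≤ expShortfall μ α X + expShortfall μ α Y := by
  set Z := fun ω => X ω + Y ω with hZ
  have hZm : Measurable Z := hXm.add hYm
  have hZint : Integrable Z μ := hX.add hY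
  haveI hpX : IsProbabilityMeasure (μ.map X) := Measure.isProbabilityMeasure_map hXm.aemeasurable
  haveI hpY : IsProbabilityMeasure (μ.map Y) := Measure.isProbabilityMeasure_map hYm.aemeasurable
  haveI hpZ : IsProbabilityMeasure (μ.map Z) := Measure.isProbabilityMeasure_map hZm.aemeasurable
  have hidX : Integrable id (μ.map X) := by
    rw [integrable_map_measure aestronglyMeasurable_id hXm.aemeasurable]
    simpa [Function.comp_def] using hX
  have hidY : Integrable id (μ.map Y) := by
    rw [integrable_map_measure aestronglyMeasurable_id hYm.aemeasurable]
    simpa [Function.comp_def] using hY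
  have hidZ : Integrable id (μ.map Z) := by
    rw [integrable_map_measure aestronglyMeasurable_id hZm.aemeasurable]
    simpa [Function.comp_def] using hZint
  have hEmap : ∀ (W : Ω → ℝ), Measurable W → ∀ r : ℝ,
      ∫ x, max (x - r) 0 ∂(μ.map W) = ∫ ω, max (W ω - r) 0 ∂μ := fun W hWm r =>
    integral_map hWm.aemeasurable
      ((continuous_id.sub continuous_const).max continuous_const).aestronglyMeasurable
  have hImap : ∀ (W : Ω → ℝ), Measurable W →
      ∫ x, (x : ℝ) ∂(μ.map W) = ∫ ω, W ω ∂μ := fun W hWm =>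
    integral_map hWm.aemeasurable continuous_id.aestronglyMeasurable
  unfold expShortfall
  rw [quantileFn_eq μ hXm, quantileFn_eq μ hYm, quantileFn_eq μ hZm]
  have hainv : (0:ℝ) ≤ (1 - α)⁻¹ := inv_nonneg.mpr (by linarith)
  have key : (∫ u in Ioo α 1, qf (μ.map Z) u) ≤
      (∫ u in Ioo α 1, qf (μ.map X) u) + (∫ u in Ioo α 1, qf (μ.map Y) u) := by
    rcases eq_or_lt_of_le hα0 with h0 | h0
    · -- α = 0 : both sides equal expectations
      subst h0
      have eX : ∫ u in Ioo (0:ℝ) 1, qf (μ.map X) u = ∫ ω, X ω ∂μ := by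
        rw [← hImap X hXm, ← integral_qf (fun x => x) continuous_id.aestronglyMeasurable]
      have eY : ∫ u in Ioo (0:ℝ) 1, qf (μ.map Y) u = ∫ ω, Y ω ∂μ := by
        rw [← hImap Y hYm, ← integral_qf (fun x => x) continuous_id.aestronglyMeasurable]
      have eZ : ∫ u in Ioo (0:ℝ) 1, qf (μ.map Z) u = ∫ ω, Z ω ∂μ := by
        rw [← hImap Z hZm, ← integral_qf (fun x => x) continuous_id.aestronglyMeasurable]
      rw [eX, eY, eZ, hZ, integral_add hX hY]
    · -- 0 < α
      set rX := qf (μ.map X) α with hrX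
      set rY := qf (μ.map Y) α with hrY
      have kA := claimA (ν := μ.map Z) hidZ (rX + rY) α hα0 hα1
      have kBX := claimB (ν := μ.map X) hidX α h0 hα1
      have kBY := claimB (ν := μ.map Y) hidY α h0 hα1
      rw [hEmap Z hZm] at kA
      rw [hEmap X hXm] at kBX
      rw [hEmap Y hYm] at kBY
      have hintX : Integrable (fun ω => max (X ω - rX) 0) μ :=
        (hX.sub (integrable_const rX)).pos_part
      have hintY : Integrable (fun ω => max (Y ω - rY) 0) μ :=
        (hY.sub (integrable_const rY)).pos_part
      have hintZ : Integrable (fun ω => max (Z ω - (rX + rY)) 0) μ :=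
        (hZint.sub (integrable_const (rX + rY))).pos_part
      have hmono : ∫ ω, max (Z ω - (rX + rY)) 0 ∂μ ≤
          ∫ ω, max (X ω - rX) 0 ∂μ + ∫ ω, max (Y ω - rY) 0 ∂μ := by
        rw [← integral_add hintX hintY]
        refine integral_mono hintZ (hintX.add hintY) (fun ω => ?_)
        have h1 := le_max_left (X ω - rX) 0
        have h2 := le_max_left (Y ω - rY) 0
        have h3 := le_max_right (X ω - rX) 0
        have h4 := le_max_right (Y ω - rY) 0
        refine max_le (by simp only [hZ]; linarith) (by linarith)
      linarith
  calc (1 - α)⁻¹ * ∫ u in Ioo α 1, qf (μ.map Z) u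
      ≤ (1 - α)⁻¹ * ((∫ u in Ioo α 1, qf (μ.map X) u) + ∫ u in Ioo α 1, qf (μ.map Y) u) :=
        mul_le_mul_of_nonneg_left key hainv
    _ = (1 - α)⁻¹ * (∫ u in Ioo α 1, qf (μ.map X) u)
        + (1 - α)⁻¹ * ∫ u in Ioo α 1, qf (μ.map Y) u := by ring
end

section
/- Let Y be a nonnegative random variable, α ∈ (0,1), and set v = VaR_α(Y). For any f ∈ 𝓕, define a = f(v) and the layer function h_a(x) = max{min{a, x}, x − v + a}. Then h_a ∈ 𝓕, h_a(v) = f(v), and h_a(x) ≥ f(x) for all x ≥ 0 (hence Y − h_a(Y) ≤ Y − f(Y) pointwise). -/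
open MeasureTheory

/-- Layer reinsurance dominates: with `v = VaR_α(Y)`, `a = f(v)` and
`h_a(x) = max{min{a,x}, x − v + a}`, the layer function `h_a` belongs to `𝓕`,
agrees with `f` at `v`, and dominates `f` pointwise on `ℝ₊`. -/
theorem layer_dominates {Ω : Type*} [MeasurableSpace Ω]
    (μ : Measure Ω) [IsProbabilityMeasure μ]
    (Y : Ω → ℝ) (hYpos : ∀ ω, 0 ≤ Y ω) (hYm : Measurable Y)
    (α : ℝ) (hα : α ∈ Set.Ioo (0 : ℝ) 1)
    (f : ℝ → ℝ) (hf1 : ∀ t, 0 ≤ t → 0 ≤ f t ∧ f t ≤ t)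
    (hf2 : MonotoneOn f (Set.Ici 0))
    (hf3 : MonotoneOn (fun t => t - f t) (Set.Ici 0))
    (v : ℝ) (hv : v = quantileFn μ Y α) (a : ℝ) (ha : a = f v) :
    (∀ x, 0 ≤ x → 0 ≤ max (min a x) (x - v + a) ∧ max (min a x) (x - v + a) ≤ x) ∧
    MonotoneOn (fun x => max (min a x) (x - v + a)) (Set.Ici 0) ∧
    MonotoneOn (fun x => x - max (min a x) (x - v + a)) (Set.Ici 0) ∧
    max (min a v) (v - v + a) = f v ∧
    (∀ x, 0 ≤ x → f x ≤ max (min a x) (x - v + a)) := by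
  have hv0 : 0 ≤ v := by
    rw [hv]
    apply Real.sInf_nonneg
    intro x hx
    by_contra hxneg
    push_neg at hxneg
    have hempty : {ω | Y ω ≤ x} = ∅ := by
      ext ω
      simp only [Set.mem_setOf_eq, Set.mem_empty_iff_false, iff_false, not_le]
      linarith [hYpos ω]
    have : α ≤ (μ {ω | Y ω ≤ x}).toReal := hx
    rw [hempty] at this
    simp at this
    linarith [hα.1]
  have ha0 : 0 ≤ a := by rw [ha]; exact (hf1 v hv0).1
  have hav : a ≤ v := by rw [ha]; exact (hf1 v hv0).2
  refine ⟨?_, ?_, ?_, ?_, ?_⟩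
  · intro x hx
    constructor
    · exact le_trans (le_min ha0 hx) (le_max_left _ _)
    · exact max_le (min_le_right _ _) (by linarith)
  · intro x hx y hy hxy
    exact max_le_max (min_le_min le_rfl hxy) (by simp; linarith)
  · intro x hx y hy hxy
    simp only
    rcases min_cases a x with ⟨h1, h2⟩ | ⟨h1, h2⟩ <;>
      rcases min_cases a y with ⟨h3, h4⟩ | ⟨h3, h4⟩ <;>
      rcases max_cases (min a x) (x - v + a) with ⟨h5, h6⟩ | ⟨h5, h6⟩ <;>
      rcases max_cases (min a y) (y - v + a) with ⟨h7, h8⟩ | ⟨h7, h8⟩ <;>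
      linarith
  · rw [min_eq_left hav, ha]; simp
  · intro x hx
    rcases le_total x v with h | h
    · refine le_trans (le_min ?_ (hf1 x hx).2) (le_max_left _ _)
      rw [ha]; exact hf2 hx hv0 h
    · refine le_trans ?_ (le_max_right _ _)
      have := hf3 (Set.mem_Ici.mpr hv0) (Set.mem_Ici.mpr hx) h
      simp only at this
      rw [ha]; linarith
end

section
/- Let Y ~ Uniform(0,1) and f ∈ 𝓕. Then there exists a ∈ [0,1] such that E[min{Y, a}] = E[f(Y)], and for this a, min{Y, a} precedes f(Y) in the convex order: E[φ(min{Y, a})] ≤ E[φ(f(Y))] for every convex function φ. -/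
open MeasureTheory Set

lemma integral_min_Ioo {a : ℝ} (h0 : 0 ≤ a) (h1 : a ≤ 1) :
    ∫ y in Set.Ioo (0 : ℝ) 1, min y a = a - a ^ 2 / 2 := by
  have hcont : Continuous fun y : ℝ => min y a := continuous_id.min continuous_const
  rw [← MeasureTheory.integral_Ioc_eq_integral_Ioo,
    ← intervalIntegral.integral_of_le (by norm_num : (0:ℝ) ≤ 1)]
  have hsplit := intervalIntegral.integral_add_adjacent_intervals (a := (0:ℝ)) (b := a)
    (c := 1) (μ := volume) (f := fun y => min y a)
    (hcont.intervalIntegrable _ _) (hcont.intervalIntegrable _ _)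
  rw [← hsplit]
  have e1 : ∫ y in (0:ℝ)..a, min y a = ∫ y in (0:ℝ)..a, y := by
    apply intervalIntegral.integral_congr
    intro y hy
    rw [Set.uIcc_of_le h0] at hy
    exact min_eq_left hy.2
  have e2 : ∫ y in a..(1:ℝ), min y a = ∫ y in a..(1:ℝ), a := by
    apply intervalIntegral.integral_congr
    intro y hy
    rw [Set.uIcc_of_le h1] at hy
    exact min_eq_right hy.1
  rw [e1, e2, integral_id, intervalIntegral.integral_const, smul_eq_mul]
  ring

lemma exists_support (φ : ℝ → ℝ) (hφ : ConvexOn ℝ Set.univ φ) (a : ℝ) :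
    ∃ m : ℝ, ∀ x, φ a + m * (x - a) ≤ φ x := by
  set S := (fun x => (φ x - φ a) / (x - a)) '' Set.Ioi a with hS
  have hne : S.Nonempty := ⟨_, a + 1, by simp, rfl⟩
  have hlb : ∀ x < a, (φ a - φ x) / (a - x) ∈ lowerBounds S := by
    rintro x hx _ ⟨y, hy, rfl⟩
    exact hφ.slope_mono_adjacent trivial trivial hx hy
  have hbdd : BddBelow S := ⟨_, hlb (a - 1) (by linarith)⟩
  refine ⟨sInf S, fun x => ?_⟩
  rcases lt_trichotomy x a with h | h | h
  · have h2 := le_csInf hne (hlb x h)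
    rw [div_le_iff₀ (by linarith : (0:ℝ) < a - x)] at h2
    nlinarith
  · simp [h]
  · have h2 := csInf_le hbdd ⟨x, h, rfl⟩
    rw [le_div_iff₀ (by linarith : (0:ℝ) < x - a)] at h2
    nlinarith

/-- For `Y ~ Uniform(0,1)` and `f ∈ 𝓕` there is `a ∈ [0,1]` with
`E[min{Y,a}] = E[f(Y)]`, and `min{Y,a}` precedes `f(Y)` in the convex order. -/
theorem stopLoss_convex_order (f : ℝ → ℝ)
    (hf1 : ∀ t ∈ Set.Icc (0 : ℝ) 1, 0 ≤ f t ∧ f t ≤ t)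
    (hf2 : MonotoneOn f (Set.Icc (0 : ℝ) 1))
    (hf3 : MonotoneOn (fun t => t - f t) (Set.Icc (0 : ℝ) 1)) :
    ∃ a ∈ Set.Icc (0 : ℝ) 1,
      (∫ y in Set.Ioo (0 : ℝ) 1, min y a) = (∫ y in Set.Ioo (0 : ℝ) 1, f y) ∧
      ∀ φ : ℝ → ℝ, ConvexOn ℝ Set.univ φ →
        (∫ y in Set.Ioo (0 : ℝ) 1, φ (min y a)) ≤ ∫ y in Set.Ioo (0 : ℝ) 1, φ (f y) := by
  -- f is 1-Lipschitz on [0,1], hence continuous there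
  have hf_lip : LipschitzOnWith 1 f (Set.Icc 0 1) := by
    rw [lipschitzOnWith_iff_dist_le_mul]
    intro x hx y hy
    rw [Real.dist_eq, Real.dist_eq]
    rcases le_total y x with h | h
    · have h1 := hf2 hy hx h
      have h2 := hf3 hy hx h
      simp only at h2
      rw [abs_of_nonneg (by linarith), abs_of_nonneg (by linarith)]
      push_cast; linarith
    · have h1 := hf2 hx hy h
      have h2 := hf3 hx hy h
      simp only at h2
      rw [abs_of_nonpos (by linarith), abs_of_nonpos (by linarith)]
      push_cast; linarith
  have hf_contOn : ContinuousOn f (Set.Icc 0 1) := hf_lip.continuousOn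
  have hf_int : IntegrableOn f (Set.Ioo 0 1) volume :=
    (hf_contOn.integrableOn_Icc).mono_set Set.Ioo_subset_Icc_self
  set I := ∫ y in Set.Ioo (0 : ℝ) 1, f y with hI
  have hI0 : 0 ≤ I :=
    setIntegral_nonneg measurableSet_Ioo fun y hy => (hf1 y ⟨hy.1.le, hy.2.le⟩).1
  have hid_int : IntegrableOn (fun y : ℝ => y) (Set.Ioo 0 1) volume :=
    continuous_id.integrableOn_Icc.mono_set Set.Ioo_subset_Icc_self
  have half : (∫ y in Set.Ioo (0 : ℝ) 1, y) = 1 / 2 := by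
    have h := integral_min_Ioo (a := 1) (by norm_num) le_rfl
    norm_num at h
    rw [setIntegral_congr_fun measurableSet_Ioo
      (fun y hy => (min_eq_left hy.2.le).symm : Set.EqOn _ (fun y => min y (1:ℝ)) _), h]
  have hI2 : I ≤ 1 / 2 := by
    rw [← half]
    exact setIntegral_mono_on hf_int hid_int measurableSet_Ioo
      fun y hy => (hf1 y ⟨hy.1.le, hy.2.le⟩).2
  -- IVT to find a
  have hIVT : I ∈ (fun a : ℝ => a - a ^ 2 / 2) '' Set.Icc 0 1 := by
    have hc : ContinuousOn (fun a : ℝ => a - a ^ 2 / 2) (Set.Icc 0 1) := by fun_prop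
    have := intermediate_value_Icc (by norm_num : (0:ℝ) ≤ 1) hc
    apply this
    constructor <;> norm_num [hI0, hI2]
  obtain ⟨a, ha, hga⟩ := hIVT
  have meq : (∫ y in Set.Ioo (0 : ℝ) 1, min y a) = I := by
    rw [integral_min_Ioo ha.1 ha.2]; exact hga
  refine ⟨a, ha, meq, ?_⟩
  intro φ hφ
  have hφc : Continuous φ := continuousOn_univ.1 (hφ.continuousOn isOpen_univ)
  obtain ⟨m, hm⟩ := exists_support φ hφ a
  have hmin_cont : Continuous fun y : ℝ => min y a := continuous_id.min continuous_const
  have hφmin_int : IntegrableOn (fun y => φ (min y a)) (Set.Ioo 0 1) volume :=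
    (hφc.comp hmin_cont).integrableOn_Icc.mono_set Set.Ioo_subset_Icc_self
  have hφf_int : IntegrableOn (fun y => φ (f y)) (Set.Ioo 0 1) volume :=
    ((hφc.comp_continuousOn hf_contOn).integrableOn_Icc).mono_set Set.Ioo_subset_Icc_self
  have hmin_int : IntegrableOn (fun y : ℝ => min y a) (Set.Ioo 0 1) volume :=
    hmin_cont.integrableOn_Icc.mono_set Set.Ioo_subset_Icc_self
  -- pointwise: ψ (min y a) ≤ ψ (f y) where ψ x = φ x - (φ a + m * (x - a))
  have hpt : ∀ y ∈ Set.Ioo (0 : ℝ) 1,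
      φ (min y a) - (φ a + m * (min y a - a)) ≤ φ (f y) - (φ a + m * (f y - a)) := by
    intro y hy
    rcases le_or_gt a y with hay | hya
    · rw [min_eq_right hay]
      have := hm (f y)
      simp only [sub_self, mul_zero]
      linarith
    · rw [min_eq_left hya.le]
      have hyIcc : y ∈ Set.Icc (0:ℝ) 1 := ⟨hy.1.le, hy.2.le⟩
      have hfy := hf1 y hyIcc
      rcases eq_or_lt_of_le hfy.2 with he | hlt
      · rw [he]
      · set u := f y with hu
        set θ := (a - y) / (a - u) with hθ
        have hau : (0:ℝ) < a - u := by linarith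
        have hθ0 : 0 ≤ θ := div_nonneg (by linarith) hau.le
        have hθ1 : θ ≤ 1 := by
          rw [div_le_one hau]; linarith
        have hscale : θ * (a - u) = a - y := by
          rw [hθ, div_mul_cancel₀ _ (ne_of_gt hau)]
        have hy_eq : θ * u + (1 - θ) * a = y := by nlinarith [hscale]
        have hcomb := hφ.2 (Set.mem_univ u) (Set.mem_univ a)
          (show (0:ℝ) ≤ θ from hθ0) (show (0:ℝ) ≤ 1 - θ by linarith)
          (show θ + (1 - θ) = 1 by ring)
        simp only [smul_eq_mul] at hcomb
        rw [hy_eq] at hcomb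
        have hA : 0 ≤ φ u - (φ a + m * (u - a)) := sub_nonneg.2 (hm u)
        have hθA : θ * (φ u - (φ a + m * (u - a))) ≤ φ u - (φ a + m * (u - a)) := by
          nlinarith
        have hmy : m * (y - a) = θ * (m * (u - a)) := by
          rw [← hy_eq]; ring
        have hrw : θ * φ u - θ * φ a - θ * (m * (u - a))
            = θ * (φ u - (φ a + m * (u - a))) := by ring
        linarith
  have hlin1 : IntegrableOn (fun y => φ a + m * (min y a - a)) (Set.Ioo 0 1) volume := by
    apply Integrable.add (integrableOn_const (by simp))
    exact (hmin_int.sub (integrableOn_const (by simp))).const_mul m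
  have hlin2 : IntegrableOn (fun y => φ a + m * (f y - a)) (Set.Ioo 0 1) volume := by
    apply Integrable.add (integrableOn_const (by simp))
    exact (hf_int.sub (integrableOn_const (by simp))).const_mul m
  have key := setIntegral_mono_on (hφmin_int.sub hlin1) (hφf_int.sub hlin2)
    measurableSet_Ioo hpt
  simp only [Pi.sub_apply] at key
  rw [integral_sub hφmin_int hlin1, integral_sub hφf_int hlin2] at key
  have lin_eq : (∫ y in Set.Ioo (0:ℝ) 1, (φ a + m * (min y a - a)))
      = ∫ y in Set.Ioo (0:ℝ) 1, (φ a + m * (f y - a)) := by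
    have e1 : ∀ (g : ℝ → ℝ), IntegrableOn g (Set.Ioo (0:ℝ) 1) volume →
        (∫ y in Set.Ioo (0:ℝ) 1, (φ a + m * (g y - a)))
        = m * (∫ y in Set.Ioo (0:ℝ) 1, g y)
          + (φ a - m * a) * (volume (Set.Ioo (0:ℝ) 1)).toReal := by
      intro g hg
      have : ∀ y, φ a + m * (g y - a) = m * g y + (φ a - m * a) := fun y => by ring
      simp_rw [this]
      rw [integral_add (hg.const_mul m) (integrableOn_const (by simp)),
        integral_const_mul m (fun y => g y), setIntegral_const, smul_eq_mul, measureReal_def]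
      ring
    rw [e1 _ hmin_int, e1 _ hf_int, meq]
  rw [lin_eq] at key
  linarith
end
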